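/- arXiv:math/0605579 — 2 statements merged into one kernel-verified Lean document; each statement's English description precedes it below -/
import Mathlib

section
/- Theorem 14: For every finite graph G, each chain group C^{i,j}(G) of the enhanced-state complex has finite rank, and the graded Euler characteristic Σ_{i,j} (−1)^i q^j rank_ℤ C^{i,j}(G), a well-defined formal series with finitely many positive powers of q, equals J_G(q) = Σ_{s ⊆ E(G)} (−1)^{|s|} q^{|s|} v^{k(s)}, where v denotes the formal series Σ_{d≥0} q^{1−d} (the expansion of q²/(q−1) in powers of q^{−1}). In other words, the graded Euler characteristic of the enhanced-state complex equals the specialization P_G(q, q²/(q−1)) of the dichromatic polynomial corresponding to the Jones polynomial of the associated alternating link. -/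
/-!
Statement 7 (Theorem 14): for every finite graph `G`, each chain group `C^{i,j}(G)` of
the enhanced-state complex has finite rank, and the graded Euler characteristic
`Σ_{i,j} (−1)^i q^j rank_ℤ C^{i,j}(G)` equals
`J_G(q) = Σ_{s ⊆ E(G)} (−1)^{|s|} q^{|s|} v^{k(s)}` with `v = Σ_{d≥0} q^{1−d}`.

Both sides are formal series with finitely many positive powers of `q`; we encode such a
series as a `LaurentSeries ℤ` (a Hahn series over `ℤ`) in the variable `q⁻¹`, i.e. the
coefficient of `q^j` is stored at index `−j`.  In particular `q^j` is
`HahnSeries.single (−j) 1` and `Σ_{d≥0} q^{−d}` is the image of the power series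
`Σ_{d≥0} u^d` under `u ↦ q⁻¹`.
-/

structure MultiGraph where
  V : Type
  E : Type
  finV : Finite V
  finE : Finite E
  ends : E → Sym2 V

attribute [instance] MultiGraph.finV MultiGraph.finE

namespace MultiGraph

def spanning (G : MultiGraph) (s : Set G.E) : SimpleGraph G.V where
  Adj a b := a ≠ b ∧ ∃ e ∈ s, G.ends e = s(a, b)
  symm := by
    constructor
    rintro a b ⟨hab, e, he, h⟩
    exact ⟨hab.symm, e, he, by rw [h, Sym2.eq_swap]⟩
  loopless := by constructor; rintro a ⟨h, -⟩; exact h rfl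

/-- `k(s)`: the number of connected components of the spanning subgraph `[G : s]`. -/
noncomputable def kcomp (G : MultiGraph) (s : Finset G.E) : ℕ :=
  Nat.card (G.spanning ↑s).ConnectedComponent

/-- An enhanced state: a state `s ⊆ E(G)` together with a labelling of the connected
components of `[G : s]` by nonnegative integers. -/
def EState (G : MultiGraph) :=
  Σ s : Finset G.E, ((G.spanning ↑s).ConnectedComponent → ℕ)

/-- `i(S) = |s|`. -/
def iDeg (G : MultiGraph) (S : EState G) : ℕ := S.1.card

/-- `j(S) = |s| + k(s) − |l|` (an integer). -/
noncomputable def jDeg (G : MultiGraph) (S : EState G) : ℤ :=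
  letI := Fintype.ofFinite (G.spanning ↑S.1).ConnectedComponent
  (S.1.card : ℤ) + (G.kcomp S.1 : ℤ) - ∑ c, (S.2 c : ℤ)

/-- `rank_ℤ C^{i,j}(G)`: the number of enhanced states `S` with `i(S) = i`, `j(S) = j`. -/
noncomputable def eRank (G : MultiGraph) (i : ℕ) (j : ℤ) : ℕ :=
  Nat.card {S : EState G // iDeg G S = i ∧ jDeg G S = j}

/-- The series `Σ_{d ≥ 0} q^{−d}` (image of `Σ_{d≥0} u^d` under `u = q⁻¹`). -/
noncomputable def geomQinv : LaurentSeries ℤ :=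
  HahnSeries.ofPowerSeries ℤ ℤ (PowerSeries.mk fun _ => (1 : ℤ))

/-- `J_G(q) = Σ_{s ⊆ E(G)} (−1)^{|s|} q^{|s|} v^{k(s)}` with
`v = Σ_{d≥0} q^{1−d} = q · Σ_{d≥0} q^{−d}`. -/
noncomputable def JG (G : MultiGraph) : LaurentSeries ℤ :=
  letI : Fintype G.E := Fintype.ofFinite G.E
  ∑ s : Finset G.E,
    HahnSeries.single (-(s.card : ℤ)) ((-1 : ℤ) ^ s.card) *
      (HahnSeries.single (-1 : ℤ) (1 : ℤ) * geomQinv) ^ G.kcomp s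

end MultiGraph

open Finset MultiGraph

-- ### auxiliary lemmas

lemma card_sum_eq (ι : Type*) [Fintype ι] [DecidableEq ι] (n : ℕ) :
    Nat.card {l : ι → ℕ // ∑ i, l i = n}
      = (finsuppAntidiag (univ : Finset ι) n).card := by
  rw [← Nat.card_eq_finsetCard]
  apply Nat.card_congr
  refine (Finsupp.equivFunOnFinite.subtypeEquiv fun f => ?_).symm
  simp [mem_finsuppAntidiag]

lemma coeff_pow_mk (ι : Type*) [Fintype ι] [DecidableEq ι] (n : ℕ) :
    PowerSeries.coeff n ((PowerSeries.mk fun _ => (1:ℤ)) ^ Fintype.card ι)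
      = (finsuppAntidiag (univ : Finset ι) n).card := by
  rw [← Finset.card_univ (α := ι), ← Finset.prod_const, PowerSeries.coeff_prod]
  simp [PowerSeries.coeff_mk]

lemma geom_coeff_neg (k : ℕ) {m : ℤ} (hm : m < 0) :
    (geomQinv ^ k).coeff m = 0 := by
  rw [geomQinv, ← map_pow, HahnSeries.ofPowerSeries_apply]
  apply HahnSeries.embDomain_notin_range
  rintro ⟨n, hn⟩
  rw [← hn] at hm
  simp only [Nat.castOrderEmbedding_apply] at hm
  omega

lemma geom_coeff_nat (k n : ℕ) :
    (geomQinv ^ k).coeff (n : ℤ)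
      = PowerSeries.coeff n ((PowerSeries.mk fun _ => (1:ℤ)) ^ k) := by
  rw [geomQinv, ← map_pow, HahnSeries.ofPowerSeries_apply_coeff]

lemma singleTerm_coeff (c k : ℕ) (r : ℤ) (j : ℤ) :
    (HahnSeries.single (-(c:ℤ)) r * (HahnSeries.single (-1:ℤ) (1:ℤ) * geomQinv) ^ k).coeff (-j)
      = r * (geomQinv ^ k).coeff ((c:ℤ) + k - j) := by
  rw [mul_pow, HahnSeries.single_pow, one_pow, ← mul_assoc, HahnSeries.single_mul_single,
    mul_one, show (k • (-1:ℤ)) = -(k:ℤ) by simp,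
    show (-j) = ((c:ℤ) + k - j) + (-(c:ℤ) + -(k:ℤ)) by ring,
    HahnSeries.coeff_single_mul_add]

-- condition rewriting
lemma jDeg_cond (G : MultiGraph) (s : Finset G.E)
    (l : (G.spanning ↑s).ConnectedComponent → ℕ) :
    letI := Fintype.ofFinite (G.spanning ↑s).ConnectedComponent
    ∀ j : ℤ, G.jDeg ⟨s, l⟩ = j ↔ ((∑ c, l c : ℕ) : ℤ) = (s.card : ℤ) + G.kcomp s - j := by
  letI := Fintype.ofFinite (G.spanning ↑s).ConnectedComponent
  intro j
  simp only [jDeg]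
  push_cast
  constructor <;> intro h <;> linarith

lemma finite_sum_eq (ι : Type*) [Fintype ι] [DecidableEq ι] (n : ℕ) :
    Finite {l : ι → ℕ // ∑ i, l i = n} :=
  Finite.of_equiv {f : ι →₀ ℕ // f ∈ finsuppAntidiag (univ : Finset ι) n}
    (Finsupp.equivFunOnFinite.subtypeEquiv fun f => by simp [mem_finsuppAntidiag])

lemma finFiber (G : MultiGraph) (s : Finset G.E) (j : ℤ) :
    Finite {l : (G.spanning ↑s).ConnectedComponent → ℕ // G.jDeg ⟨s, l⟩ = j} := by
  classical
  letI := Fintype.ofFinite (G.spanning ↑s).ConnectedComponent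
  haveI := finite_sum_eq (G.spanning ↑s).ConnectedComponent ((s.card : ℤ) + G.kcomp s - j).toNat
  refine Finite.of_injective
    (β := {l : (G.spanning ↑s).ConnectedComponent → ℕ //
        ∑ i, l i = ((s.card : ℤ) + G.kcomp s - j).toNat})
    (fun l => ⟨l.1, by have := (jDeg_cond G s l.1 j).mp l.2; omega⟩) ?_
  intro a b h
  simpa [Subtype.ext_iff] using h

lemma termCoeff (G : MultiGraph) (s : Finset G.E) (j : ℤ) :
    (HahnSeries.single (-(s.card : ℤ)) ((-1 : ℤ) ^ s.card) *
      (HahnSeries.single (-1 : ℤ) (1 : ℤ) * geomQinv) ^ G.kcomp s).coeff (-j)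
      = (-1:ℤ)^s.card *
        (Nat.card {l : (G.spanning ↑s).ConnectedComponent → ℕ // G.jDeg ⟨s, l⟩ = j} : ℤ) := by
  classical
  letI := Fintype.ofFinite (G.spanning ↑s).ConnectedComponent
  rw [singleTerm_coeff]
  congr 1
  set N : ℤ := (s.card : ℤ) + (G.kcomp s : ℤ) - j with hN
  rcases lt_or_ge N 0 with hneg | hpos
  · rw [geom_coeff_neg _ hneg]
    have : IsEmpty {l : (G.spanning ↑s).ConnectedComponent → ℕ // G.jDeg ⟨s, l⟩ = j} := by
      constructor; rintro ⟨l, hl⟩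
      rw [jDeg_cond] at hl
      omega
    simp [Nat.card_of_isEmpty]
  · obtain ⟨m, hm⟩ : ∃ m : ℕ, N = m := ⟨N.toNat, (Int.toNat_of_nonneg hpos).symm⟩
    rw [hm, geom_coeff_nat]
    have hk : G.kcomp s = Fintype.card (G.spanning ↑s).ConnectedComponent := by
      rw [kcomp, Nat.card_eq_fintype_card]
    rw [hk, coeff_pow_mk, ← card_sum_eq]
    congr 1
    apply Nat.card_congr
    refine Equiv.subtypeEquivRight fun l => ?_
    rw [jDeg_cond, ← hN, hm, Nat.cast_inj]


/-- Theorem 14: each `C^{i,j}(G)` has finite rank and the graded Euler characteristic of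
the enhanced-state complex equals `J_G(q)` (coefficientwise: the coefficient of `q^j` of
a series is its coefficient at index `−j`). -/
theorem enhanced_euler_char (G : MultiGraph) :
    (∀ (i : ℕ) (j : ℤ), Finite {S : MultiGraph.EState G //
        MultiGraph.iDeg G S = i ∧ MultiGraph.jDeg G S = j}) ∧
    (∀ j : ℤ, ∑ᶠ i : ℕ, (-1 : ℤ) ^ i * (MultiGraph.eRank G i j : ℤ)
        = (MultiGraph.JG G).coeff (-j)) := by
  classical
  letI : Fintype G.E := Fintype.ofFinite G.E
  haveI hf : ∀ (s : Finset G.E) (j : ℤ),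
      Finite {l : (G.spanning ↑s).ConnectedComponent → ℕ // G.jDeg ⟨s, l⟩ = j} :=
    fun s j => finFiber G s j
  have eqv : ∀ (i : ℕ) (j : ℤ),
      {S : EState G // iDeg G S = i ∧ jDeg G S = j} ≃
        Σ s : {s : Finset G.E // s.card = i},
          {l : (G.spanning ↑s.1).ConnectedComponent → ℕ // G.jDeg ⟨s.1, l⟩ = j} :=
    fun i j =>
    { toFun := fun S => ⟨⟨S.1.1, S.2.1⟩, ⟨S.1.2, S.2.2⟩⟩
      invFun := fun x => ⟨⟨x.1.1, x.2.1⟩, ⟨x.1.2, x.2.2⟩⟩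
      left_inv := fun _ => rfl
      right_inv := fun _ => rfl }
  refine ⟨fun i j => Finite.of_equiv _ (eqv i j).symm, fun j => ?_⟩
  set n : Finset G.E → ℕ :=
    fun s => Nat.card {l : (G.spanning ↑s).ConnectedComponent → ℕ // G.jDeg ⟨s, l⟩ = j}
    with hn
  -- Step 1 : rank decomposition
  have hrank : ∀ i, eRank G i j
      = ∑ s ∈ univ.filter (fun s : Finset G.E => s.card = i), n s := by
    intro i
    letI : ∀ s : {s : Finset G.E // s.card = i},
        Fintype {l : (G.spanning ↑s.1).ConnectedComponent → ℕ // G.jDeg ⟨s.1, l⟩ = j} :=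
      fun s => Fintype.ofFinite _
    rw [eRank, Nat.card_congr (eqv i j), Nat.card_eq_fintype_card, Fintype.card_sigma]
    have h1 : ∀ a : {s : Finset G.E // s.card = i},
        Fintype.card {l : (G.spanning ↑a.1).ConnectedComponent → ℕ // G.jDeg ⟨a.1, l⟩ = j}
          = n a.1 := fun a => (Nat.card_eq_fintype_card).symm
    simp_rw [h1]
    exact (Finset.sum_subtype _ (fun s => by simp) n).symm
  -- Step 2 : support of the finsum
  have hsupp : (Function.support fun i => (-1:ℤ)^i * (eRank G i j : ℤ))
      ⊆ ↑(Finset.range (Fintype.card G.E + 1)) := by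
    intro i hi
    simp only [Function.mem_support] at hi
    have hne : eRank G i j ≠ 0 := by
      intro h; rw [h] at hi; simp at hi
    obtain ⟨⟨S, hS⟩⟩ := (Nat.card_ne_zero.mp hne).1
    have hle : S.1.card ≤ Fintype.card G.E := by
      simpa using Finset.card_le_univ S.1
    have : iDeg G S = i := hS.1
    simp only [Finset.coe_range, Set.mem_Iio]
    rw [iDeg] at this
    omega
  rw [finsum_eq_sum_of_support_subset _ hsupp]
  -- Step 3 : LHS as a sum over states
  have lhs : ∑ i ∈ range (Fintype.card G.E + 1), (-1:ℤ)^i * (eRank G i j : ℤ)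
      = ∑ s : Finset G.E, (-1:ℤ)^s.card * (n s : ℤ) := by
    rw [← Finset.sum_fiberwise_of_maps_to
      (g := fun s : Finset G.E => s.card) (t := range (Fintype.card G.E + 1))
      (fun s _ => Finset.mem_range.mpr (by
        have h2 := Finset.card_le_univ s
        have h3 : #Finset.univ = Fintype.card G.E := Finset.card_univ
        exact Nat.lt_succ_of_le (h3 ▸ h2)))
      (fun s => (-1:ℤ)^s.card * (n s : ℤ))]
    refine Finset.sum_congr rfl fun i _ => ?_
    rw [hrank i, Nat.cast_sum, Finset.mul_sum]
    refine Finset.sum_congr rfl fun s hs => ?_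
    rw [(Finset.mem_filter.mp hs).2]
  rw [lhs]
  -- Step 4 : RHS coefficientwise
  rw [JG]
  have hms : (∑ s : Finset G.E,
        HahnSeries.single (-(s.card : ℤ)) ((-1 : ℤ) ^ s.card) *
          (HahnSeries.single (-1 : ℤ) (1 : ℤ) * geomQinv) ^ G.kcomp s).coeff (-j)
      = ∑ s : Finset G.E,
        (HahnSeries.single (-(s.card : ℤ)) ((-1 : ℤ) ^ s.card) *
          (HahnSeries.single (-1 : ℤ) (1 : ℤ) * geomQinv) ^ G.kcomp s).coeff (-j) :=
    map_sum (HahnSeries.coeff.addMonoidHom (-j)) _ Finset.univ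
  rw [hms]
  exact Finset.sum_congr rfl fun s _ => (termCoeff G s j).symm
end

section
/- The per-edge maps of the construction of Section 3.4 preserve the grading, make every square of the cube of resolutions commute, and the resulting signed sums satisfy d^{i+1} ∘ d^i = 0; hence (D_n(G), d) is a chain complex of graded ℤ-modules with grading-preserving differentials, for every finite graph G and every integer n ≤ 2. -/
namespace MultiGraph

/-- The map between component sets induced by enlarging the state. -/
def push (G : MultiGraph) {s s' : Finset G.E} (h : s ⊆ s') :
    (G.spanning ↑s).ConnectedComponent → (G.spanning ↑s').ConnectedComponent :=
  SimpleGraph.ConnectedComponent.map (SimpleGraph.Hom.ofLE (by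
    rintro a b ⟨hne, e, he, hh⟩
    exact ⟨hne, e, h he, hh⟩))

/-- A monomial basis element of the cube of `D_n(G)`: a state `s ⊆ E(G)` together with
a monomial of `ℤ[x_{i_1},…,x_{i_l}]`, encoded by its exponent at (the variable of) each
connected component of `[G : s]`. -/
def MBasis (G : MultiGraph) :=
  Σ s : Finset G.E, ((G.spanning ↑s).ConnectedComponent → ℕ)

/-- The internal degree of a monomial basis element of `M_ε{l(n−1)+|ε|}`: the degree
shift `k(s)(n−1) + |s|` minus the total degree of the monomial (each variable has
degree `−1`). -/
noncomputable def mdeg (G : MultiGraph) (n : ℤ) (p : MBasis G) : ℤ :=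
  letI := Fintype.ofFinite (G.spanning ↑p.1).ConnectedComponent
  (n - 1) * (G.kcomp p.1 : ℤ) + (p.1.card : ℤ) - ∑ c, (p.2 c : ℤ)

/-- The basis element obtained from `(s, μ)` by the per-edge map of the edge `e ∉ s`:
if `e` merges two components `K_p`, `K_q`, the monomial map substitutes `x_{i_p}` for
`x_{i_q}` and multiplies by `x_{i_p}^{2−n}` (so the exponents add up and increase by
`2−n` on the merged component); if both endpoints of `e` lie in a single component
`K_p`, it is multiplication by `x_{i_p}`. -/
noncomputable def addEdgeM (G : MultiGraph) (n : ℤ) (p : MBasis G) (e : G.E) :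
    MBasis G := by
  classical
  exact ⟨insert e p.1, fun c' =>
    letI := Fintype.ofFinite (G.spanning ↑p.1).ConnectedComponent
    (∑ c ∈ Finset.univ.filter
        (fun c => push G (Finset.subset_insert e p.1) c = c'), p.2 c) +
    (if (∃ u ∈ G.ends e, (G.spanning ↑(insert e p.1)).connectedComponentMk u = c')
      then (if (∀ u v : G.V, G.ends e = s(u, v) → (G.spanning ↑p.1).Reachable u v)
            then 1 else (2 - n).toNat)
      else 0)⟩

/-- The per-edge map of the edge `e`, as an endomorphism of the total module of the
cube (it vanishes on basis elements whose state already contains `e`). -/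
noncomputable def perEdge (G : MultiGraph) (n : ℤ) (e : G.E) :
    (MBasis G →₀ ℤ) →ₗ[ℤ] (MBasis G →₀ ℤ) := by
  classical
  exact Finsupp.lift _ ℤ _ (fun p =>
    if e ∈ p.1 then 0 else Finsupp.single (addEdgeM G n p e) (1 : ℤ))

/-- The total differential of `D_n(G)` (w.r.t. an ordering `ord` of the edges). -/
noncomputable def mDiff (G : MultiGraph) (n : ℤ) (ord : G.E ↪ ℕ) :
    (MBasis G →₀ ℤ) →ₗ[ℤ] (MBasis G →₀ ℤ) := by
  classical
  exact Finsupp.lift _ ℤ _ (fun p =>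
    letI : Fintype G.E := Fintype.ofFinite G.E
    ∑ e ∈ Finset.univ.filter (fun e => e ∉ p.1),
      ((-1 : ℤ) ^ (p.1.filter (fun f => ord f < ord e)).card) •
        Finsupp.single (addEdgeM G n p e) (1 : ℤ))

/-- The span of the basis elements with `|s| = i` and internal degree `j`,
i.e. `D_n^{i,j}(G)` inside the total module. -/
noncomputable def mDegSub (G : MultiGraph) (n : ℤ) (i : ℕ) (j : ℤ) :
    Submodule ℤ (MBasis G →₀ ℤ) :=
  Submodule.span ℤ {x | ∃ p : MBasis G, p.1.card = i ∧ mdeg G n p = j ∧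
    x = Finsupp.single p (1 : ℤ)}

end MultiGraph

section Lemmas
open SimpleGraph Finset

/-- Reachability in a graph with one edge added. -/
lemma reachable_sup_edge {V : Type*} (H : SimpleGraph V) (u v a b : V) :
    (H ⊔ edge u v).Reachable a b ↔
      H.Reachable a b ∨ (H.Reachable a u ∧ H.Reachable v b) ∨
        (H.Reachable a v ∧ H.Reachable u b) := by
  constructor
  · rintro ⟨w⟩
    induction w with
    | nil => exact Or.inl (Reachable.refl _)
    | @cons x y z hadj p ih =>
      rcases hadj with h | h
      · have hxy : H.Reachable x y := h.reachable
        rcases ih with h1 | ⟨h1, h2⟩ | ⟨h1, h2⟩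
        · exact Or.inl (hxy.trans h1)
        · exact Or.inr (Or.inl ⟨hxy.trans h1, h2⟩)
        · exact Or.inr (Or.inr ⟨hxy.trans h1, h2⟩)
      · rw [edge_adj] at h
        obtain ⟨⟨rfl, rfl⟩ | ⟨rfl, rfl⟩, hne⟩ := h
        · rcases ih with h1 | ⟨h1, h2⟩ | ⟨h1, h2⟩
          · exact Or.inr (Or.inl ⟨Reachable.refl _, h1⟩)
          · exact Or.inl (h1.symm.trans h2)
          · exact Or.inl h2
        · rcases ih with h1 | ⟨h1, h2⟩ | ⟨h1, h2⟩
          · exact Or.inr (Or.inr ⟨Reachable.refl _, h1⟩)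
          · exact Or.inl h2
          · exact Or.inl (h1.symm.trans h2)
  · have hmap : ∀ {x y : V}, H.Reachable x y → (H ⊔ edge u v).Reachable x y :=
      fun h => h.mono le_sup_left
    have huv : (H ⊔ edge u v).Reachable u v := by
      by_cases h : u = v
      · exact h ▸ Reachable.refl _
      · exact Adj.reachable (by rw [sup_adj, edge_adj]; exact Or.inr ⟨Or.inl ⟨rfl, rfl⟩, h⟩)
    rintro (h | ⟨h1, h2⟩ | ⟨h1, h2⟩)
    · exact hmap h
    · exact ((hmap h1).trans huv).trans (hmap h2)
    · exact ((hmap h1).trans huv.symm).trans (hmap h2)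

namespace MultiGraph
attribute [local instance] Classical.propDecidable
variable (G : MultiGraph)

lemma spanning_insert (e : G.E) (s : Finset G.E) {u v : G.V} (h : G.ends e = s(u, v)) :
    G.spanning ↑(insert e s) = G.spanning ↑s ⊔ SimpleGraph.edge u v := by
  ext a b
  simp only [spanning, SimpleGraph.sup_adj, SimpleGraph.edge_adj, Finset.coe_insert,
    Set.mem_insert_iff, Finset.mem_coe]
  constructor
  · rintro ⟨hab, f, (rfl | hf), hfab⟩
    · rw [h, Sym2.eq_iff] at hfab
      rcases hfab with ⟨rfl, rfl⟩ | ⟨rfl, rfl⟩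
      · exact Or.inr ⟨Or.inl ⟨rfl, rfl⟩, hab⟩
      · exact Or.inr ⟨Or.inr ⟨rfl, rfl⟩, hab⟩
    · exact Or.inl ⟨hab, f, hf, hfab⟩
  · rintro (⟨hab, f, hf, hfab⟩ | ⟨(⟨rfl, rfl⟩ | ⟨rfl, rfl⟩), hab⟩)
    · exact ⟨hab, f, Or.inr hf, hfab⟩
    · exact ⟨hab, e, Or.inl rfl, h⟩
    · exact ⟨hab, e, Or.inl rfl, by rw [h, Sym2.eq_swap]⟩

lemma reach_insert (e : G.E) (s : Finset G.E) {u v : G.V} (h : G.ends e = s(u, v)) (a b : G.V) :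
    (G.spanning ↑(insert e s)).Reachable a b ↔
      (G.spanning ↑s).Reachable a b ∨
        ((G.spanning ↑s).Reachable a u ∧ (G.spanning ↑s).Reachable v b) ∨
        ((G.spanning ↑s).Reachable a v ∧ (G.spanning ↑s).Reachable u b) := by
  rw [spanning_insert G e s h, reachable_sup_edge]

lemma push_mk {s s' : Finset G.E} (h : s ⊆ s') (a : G.V) :
    push G h ((G.spanning ↑s).connectedComponentMk a)
      = (G.spanning ↑s').connectedComponentMk a := by
  simp [push, SimpleGraph.ConnectedComponent.map_mk, SimpleGraph.Hom.ofLE_apply]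

/-- The loop/connectivity condition governing the per-edge map. -/
def rcond (s : Finset G.E) (e : G.E) : Prop :=
  ∀ u v : G.V, G.ends e = s(u, v) → (G.spanning ↑s).Reachable u v

lemma exists_ends (e : G.E) : ∃ u v : G.V, G.ends e = s(u, v) := by
  have : ∀ z : Sym2 G.V, ∃ u v : G.V, z = s(u, v) := by
    intro z
    induction z using Sym2.ind with
    | _ u v => exact ⟨u, v, rfl⟩
  exact this _

lemma rcond_iff {s : Finset G.E} {e : G.E} {u v : G.V} (h : G.ends e = s(u, v)) :
    rcond G s e ↔ (G.spanning ↑s).Reachable u v := by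
  constructor
  · exact fun hr => hr u v h
  · intro hr a b hab
    rw [h, Sym2.eq_iff] at hab
    rcases hab with ⟨rfl, rfl⟩ | ⟨rfl, rfl⟩
    · exact hr
    · exact hr.symm

section Count
variable {G}
variable {s : Finset G.E} {e : G.E} {u v : G.V}

lemma reach_of_mem (he : G.ends e = s(u, v)) {s' : Finset G.E} (hes : e ∈ s') :
    (G.spanning ↑s').Reachable u v := by
  by_cases huv : u = v
  · exact huv ▸ SimpleGraph.Reachable.refl _
  · exact SimpleGraph.Adj.reachable ⟨huv, e, hes, he⟩

lemma mk_eq_iff (s' : Finset G.E) (a b : G.V) :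
    (G.spanning ↑s').connectedComponentMk a = (G.spanning ↑s').connectedComponentMk b
      ↔ (G.spanning ↑s').Reachable a b :=
  SimpleGraph.ConnectedComponent.eq

/-- The condition "component `c'` contains an endpoint of `e`" holds exactly at the
component of `u`. -/
lemma endpoint_cond_iff (he : G.ends e = s(u, v)) {s' : Finset G.E} (hes : e ∈ s')
    (c' : (G.spanning ↑s').ConnectedComponent) :
    (∃ w ∈ G.ends e, (G.spanning ↑s').connectedComponentMk w = c') ↔
      c' = (G.spanning ↑s').connectedComponentMk u := by
  have huv : (G.spanning ↑s').connectedComponentMk u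
      = (G.spanning ↑s').connectedComponentMk v :=
    (mk_eq_iff s' u v).2 (reach_of_mem he hes)
  constructor
  · rintro ⟨w, hw, rfl⟩
    rw [he, Sym2.mem_iff] at hw
    rcases hw with rfl | rfl
    · rfl
    · exact huv.symm
  · rintro rfl
    exact ⟨u, by rw [he]; exact Sym2.mem_mk_left u v, rfl⟩

/-- Fibers of `push` in the non-merging case. -/
lemma push_fiber_single (he : G.ends e = s(u, v)) (hr : rcond G s e) (a b : G.V) :
    push G (Finset.subset_insert e s) ((G.spanning ↑s).connectedComponentMk a)
        = (G.spanning ↑(insert e s)).connectedComponentMk b ↔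
      (G.spanning ↑s).connectedComponentMk a = (G.spanning ↑s).connectedComponentMk b := by
  rw [push_mk, mk_eq_iff, mk_eq_iff, reach_insert G e s he]
  have hruv := (rcond_iff G he).1 hr
  constructor
  · rintro (h | ⟨h1, h2⟩ | ⟨h1, h2⟩)
    · exact h
    · exact (h1.trans hruv).trans h2
    · exact (h1.trans hruv.symm).trans h2
  · exact Or.inl

lemma push_bijective (he : G.ends e = s(u, v)) (hr : rcond G s e) :
    Function.Bijective (push G (Finset.subset_insert e s)) := by
  constructor
  · intro c1 c2
    induction c1 using SimpleGraph.ConnectedComponent.ind with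
    | _ a =>
      induction c2 using SimpleGraph.ConnectedComponent.ind with
      | _ b =>
        intro h
        rw [push_mk] at h
        exact (push_fiber_single he hr a b).1 (by rw [push_mk] at h ⊢; rw [h])
  · intro c'
    induction c' using SimpleGraph.ConnectedComponent.ind with
    | _ b => exact ⟨(G.spanning ↑s).connectedComponentMk b, push_mk G _ b⟩

lemma push_surjective {s' : Finset G.E} (hss : s ⊆ s') :
    Function.Surjective (push G hss) := by
  intro c'
  induction c' using SimpleGraph.ConnectedComponent.ind with
  | _ b => exact ⟨(G.spanning ↑s).connectedComponentMk b, push_mk G _ b⟩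

lemma kcomp_insert_of_rcond (hr : rcond G s e) : G.kcomp (insert e s) = G.kcomp s := by
  obtain ⟨u, v, he⟩ := exists_ends G e
  exact (Nat.card_eq_of_bijective _ (push_bijective he hr)).symm

/-- Fiber description in the merging case. -/
lemma push_fiber_merge (he : G.ends e = s(u, v)) (hnr : ¬ (G.spanning ↑s).Reachable u v)
    (a b : G.V) :
    push G (Finset.subset_insert e s) ((G.spanning ↑s).connectedComponentMk a)
        = (G.spanning ↑(insert e s)).connectedComponentMk b ↔
      ((G.spanning ↑s).Reachable a b ∨
        ((G.spanning ↑s).Reachable a u ∧ (G.spanning ↑s).Reachable v b) ∨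
        ((G.spanning ↑s).Reachable a v ∧ (G.spanning ↑s).Reachable u b)) := by
  rw [push_mk, mk_eq_iff, reach_insert G e s he]

lemma fiber_card_merge (he : G.ends e = s(u, v)) (hnr : ¬ (G.spanning ↑s).Reachable u v)
    (b : G.V) :
    letI := Fintype.ofFinite (G.spanning ↑s).ConnectedComponent
    (Finset.univ.filter (fun c => push G (Finset.subset_insert e s) c
        = (G.spanning ↑(insert e s)).connectedComponentMk b)).card
      = 1 + (if (G.spanning ↑(insert e s)).connectedComponentMk b
          = (G.spanning ↑(insert e s)).connectedComponentMk u then 1 else 0) := by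
  letI := Fintype.ofFinite (G.spanning ↑s).ConnectedComponent
  by_cases hb : (G.spanning ↑s).Reachable b u ∨ (G.spanning ↑s).Reachable b v
  · have hset : (Finset.univ.filter (fun c => push G (Finset.subset_insert e s) c
        = (G.spanning ↑(insert e s)).connectedComponentMk b))
        = {(G.spanning ↑s).connectedComponentMk u, (G.spanning ↑s).connectedComponentMk v} := by
      ext c
      induction c using SimpleGraph.ConnectedComponent.ind with
      | _ a =>
        simp only [Finset.mem_filter, Finset.mem_univ, true_and, Finset.mem_insert,
          Finset.mem_singleton, push_fiber_merge he hnr, mk_eq_iff]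
        constructor
        · rintro (h | ⟨h1, h2⟩ | ⟨h1, h2⟩)
          · rcases hb with hb | hb
            · exact Or.inl (h.trans hb)
            · exact Or.inr (h.trans hb)
          · exact Or.inl h1
          · exact Or.inr h1
        · rintro (h | h)
          · rcases hb with hb | hb
            · exact Or.inl (h.trans hb.symm)
            · exact Or.inr (Or.inl ⟨h, hb.symm⟩)
          · rcases hb with hb | hb
            · exact Or.inr (Or.inr ⟨h, hb.symm⟩)
            · exact Or.inl (h.trans hb.symm)
    have hne : (G.spanning ↑s).connectedComponentMk u ≠ (G.spanning ↑s).connectedComponentMk v :=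
      fun h => hnr ((mk_eq_iff s u v).1 h)
    have hcond : (G.spanning ↑(insert e s)).connectedComponentMk b
        = (G.spanning ↑(insert e s)).connectedComponentMk u := by
      rw [mk_eq_iff, reach_insert G e s he]
      rcases hb with hb | hb
      · exact Or.inl hb
      · exact Or.inr (Or.inr ⟨hb, SimpleGraph.Reachable.refl _⟩)
    rw [hset, hcond, if_pos rfl, Finset.card_insert_of_notMem (by simpa using hne),
      Finset.card_singleton]
  · push_neg at hb
    have hset : (Finset.univ.filter (fun c => push G (Finset.subset_insert e s) c
        = (G.spanning ↑(insert e s)).connectedComponentMk b))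
        = {(G.spanning ↑s).connectedComponentMk b} := by
      ext c
      induction c using SimpleGraph.ConnectedComponent.ind with
      | _ a =>
        simp only [Finset.mem_filter, Finset.mem_univ, true_and, Finset.mem_singleton,
          push_fiber_merge he hnr, mk_eq_iff]
        constructor
        · rintro (h | ⟨h1, h2⟩ | ⟨h1, h2⟩)
          · exact h
          · exact absurd h2.symm hb.2
          · exact absurd h2.symm hb.1
        · exact Or.inl
    have hcond : ¬ (G.spanning ↑(insert e s)).connectedComponentMk b
        = (G.spanning ↑(insert e s)).connectedComponentMk u := by
      rw [mk_eq_iff, reach_insert G e s he]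
      rintro (h | ⟨h1, h2⟩ | ⟨h1, h2⟩)
      · exact hb.1 h
      · exact hb.1 h1
      · exact hb.2 h1
    rw [hset, if_neg hcond, Finset.card_singleton]

lemma kcomp_insert_of_not_rcond (hnr : ¬ rcond G s e) :
    G.kcomp s = G.kcomp (insert e s) + 1 := by
  obtain ⟨u, v, he⟩ := exists_ends G e
  have hnr' : ¬ (G.spanning ↑s).Reachable u v := fun h => hnr ((rcond_iff G he).2 h)
  letI := Fintype.ofFinite (G.spanning ↑s).ConnectedComponent
  letI := Fintype.ofFinite (G.spanning ↑(insert e s)).ConnectedComponent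
  have hcard : (Finset.univ : Finset (G.spanning ↑s).ConnectedComponent).card
      = ∑ c' : (G.spanning ↑(insert e s)).ConnectedComponent,
        (Finset.univ.filter (fun c => push G (Finset.subset_insert e s) c = c')).card :=
    Finset.card_eq_sum_card_fiberwise (fun x _ => Finset.mem_univ _)
  have hsum : ∀ c' : (G.spanning ↑(insert e s)).ConnectedComponent,
      (Finset.univ.filter (fun c => push G (Finset.subset_insert e s) c = c')).card
        = 1 + (if c' = (G.spanning ↑(insert e s)).connectedComponentMk u then 1 else 0) := by
    intro c'
    induction c' using SimpleGraph.ConnectedComponent.ind with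
    | _ b => exact fiber_card_merge he hnr' b
  rw [Finset.sum_congr rfl (fun c' _ => hsum c'), Finset.sum_add_distrib,
    Finset.sum_const, smul_eq_mul, mul_one, Finset.sum_ite_eq'] at hcard
  simp only [Finset.mem_univ, if_true] at hcard
  have h1 : G.kcomp s = (Finset.univ : Finset (G.spanning ↑s).ConnectedComponent).card := by
    rw [kcomp, Nat.card_eq_fintype_card, Finset.card_univ]
  have h2 : G.kcomp (insert e s)
      = (Finset.univ : Finset (G.spanning ↑(insert e s)).ConnectedComponent).card := by
    rw [kcomp, Nat.card_eq_fintype_card, Finset.card_univ]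
  omega

end Count
section Deg
variable {G}
variable {n : ℤ} {p : MBasis G} {e : G.E}

lemma addEdgeM_fst (n : ℤ) (p : MBasis G) (e : G.E) :
    (addEdgeM G n p e).1 = insert e p.1 := rfl

lemma addEdgeM_snd_apply (n : ℤ) (p : MBasis G) (e : G.E)
    (c' : (G.spanning ↑(insert e p.1)).ConnectedComponent) :
    (addEdgeM G n p e).2 c' =
      (letI := Fintype.ofFinite (G.spanning ↑p.1).ConnectedComponent
       ∑ c ∈ Finset.univ.filter
          (fun c => push G (Finset.subset_insert e p.1) c = c'), p.2 c) +
      (if (∃ u ∈ G.ends e, (G.spanning ↑(insert e p.1)).connectedComponentMk u = c')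
        then (if rcond G p.1 e then 1 else (2 - n).toNat) else 0) := rfl

lemma addEdgeM_sum (he : e ∉ p.1) :
    letI := Fintype.ofFinite (G.spanning ↑(insert e p.1)).ConnectedComponent
    letI := Fintype.ofFinite (G.spanning ↑p.1).ConnectedComponent
    ∑ c' : (G.spanning ↑(insert e p.1)).ConnectedComponent, (addEdgeM G n p e).2 c'
      = (∑ c : (G.spanning ↑p.1).ConnectedComponent, p.2 c)
        + (if rcond G p.1 e then 1 else (2 - n).toNat) := by
  letI := Fintype.ofFinite (G.spanning ↑(insert e p.1)).ConnectedComponent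
  letI := Fintype.ofFinite (G.spanning ↑p.1).ConnectedComponent
  obtain ⟨u, v, he'⟩ := exists_ends G e
  calc ∑ c' : (G.spanning ↑(insert e p.1)).ConnectedComponent, (addEdgeM G n p e).2 c'
      = ∑ c' : (G.spanning ↑(insert e p.1)).ConnectedComponent,
          ((∑ c ∈ Finset.univ.filter
              (fun c => push G (Finset.subset_insert e p.1) c = c'), p.2 c) +
           (if (∃ w ∈ G.ends e, (G.spanning ↑(insert e p.1)).connectedComponentMk w = c')
            then (if rcond G p.1 e then 1 else (2 - n).toNat) else 0)) := by
        refine Finset.sum_congr rfl fun c' _ => ?_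
        rw [addEdgeM_snd_apply]
    _ = (∑ c : (G.spanning ↑p.1).ConnectedComponent, p.2 c)
        + (if rcond G p.1 e then 1 else (2 - n).toNat) := by
        rw [Finset.sum_add_distrib]
        congr 1
        · simp_rw [Finset.sum_filter]
          rw [Finset.sum_comm]
          simp
        · have hcond := endpoint_cond_iff he' (Finset.mem_insert_self e p.1)
          calc ∑ c' : (G.spanning ↑(insert e p.1)).ConnectedComponent,
                (if (∃ w ∈ G.ends e, (G.spanning ↑(insert e p.1)).connectedComponentMk w = c')
                 then (if rcond G p.1 e then 1 else (2 - n).toNat) else 0)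
              = ∑ c' : (G.spanning ↑(insert e p.1)).ConnectedComponent,
                (if c' = (G.spanning ↑(insert e p.1)).connectedComponentMk u
                 then (if rcond G p.1 e then 1 else (2 - n).toNat) else 0) := by
                refine Finset.sum_congr rfl fun c' _ => ?_
                rw [if_congr (hcond c') rfl rfl]
            _ = (if rcond G p.1 e then 1 else (2 - n).toNat) := by
                rw [Finset.sum_ite_eq']
                simp

lemma card_addEdgeM (he : e ∉ p.1) :
    (addEdgeM G n p e).1.card = p.1.card + 1 := by
  rw [addEdgeM_fst, Finset.card_insert_of_notMem he]

lemma mdeg_addEdgeM (hn : n ≤ 2) (he : e ∉ p.1) :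
    mdeg G n (addEdgeM G n p e) = mdeg G n p := by
  have hsum := addEdgeM_sum (G := G) (n := n) (p := p) (e := e) he
  letI := Fintype.ofFinite (G.spanning ↑(insert e p.1)).ConnectedComponent
  letI := Fintype.ofFinite (G.spanning ↑p.1).ConnectedComponent
  letI := Fintype.ofFinite (G.spanning ↑(addEdgeM G n p e).1).ConnectedComponent
  have h3 : (∑ c : (G.spanning ↑(addEdgeM G n p e).1).ConnectedComponent,
        ((addEdgeM G n p e).2 c : ℤ))
      = (∑ c : (G.spanning ↑p.1).ConnectedComponent, (p.2 c : ℤ))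
        + (if rcond G p.1 e then (1 : ℤ) else ((2 - n).toNat : ℤ)) := by
    calc (∑ c : (G.spanning ↑(addEdgeM G n p e).1).ConnectedComponent,
            ((addEdgeM G n p e).2 c : ℤ))
        = ((∑ c' : (G.spanning ↑(insert e p.1)).ConnectedComponent,
            (addEdgeM G n p e).2 c' : ℕ) : ℤ) := by
          refine Eq.trans ?_ (Nat.cast_sum _ _).symm
          exact rfl
      _ = ((((∑ c : (G.spanning ↑p.1).ConnectedComponent, p.2 c)
            + (if rcond G p.1 e then 1 else (2 - n).toNat) : ℕ)) : ℤ) := by rw [hsum]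
      _ = (∑ c : (G.spanning ↑p.1).ConnectedComponent, (p.2 c : ℤ))
            + (if rcond G p.1 e then (1 : ℤ) else ((2 - n).toNat : ℤ)) := by
          rw [Nat.cast_add, Nat.cast_sum, apply_ite (fun m : ℕ => (m : ℤ)), Nat.cast_one]
  unfold mdeg
  rw [h3, card_addEdgeM he,
    show G.kcomp (addEdgeM G n p e).1 = G.kcomp (insert e p.1) from rfl]
  by_cases hr : rcond G p.1 e
  · rw [if_pos hr, kcomp_insert_of_rcond hr]
    push_cast
    ring
  · rw [if_neg hr]
    have hk : (G.kcomp p.1 : ℤ) = (G.kcomp (insert e p.1) : ℤ) + 1 := by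
      have h := kcomp_insert_of_not_rcond (e := e) hr
      exact_mod_cast congrArg (Nat.cast : ℕ → ℤ) h
    have ht : (((2 - n).toNat : ℕ) : ℤ) = 2 - n := Int.toNat_of_nonneg (by omega)
    rw [ht, hk]
    push_cast
    ring

end Deg


section Comm
variable {G}
variable {n : ℤ} {p : MBasis G} {e f : G.E}

lemma sum_fiber_comp {ι κ τ M : Type*} [AddCommMonoid M] [Fintype ι] [Fintype κ]
    (g1 : ι → κ) (g2 : κ → τ) (C : τ) (μ : ι → M) :
    ∑ c' ∈ Finset.univ.filter (fun c' => g2 c' = C),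
      ∑ c ∈ Finset.univ.filter (fun c => g1 c = c'), μ c
      = ∑ c ∈ Finset.univ.filter (fun c => g2 (g1 c) = C), μ c := by
  have fib : ∀ (F : ι → M),
      (∑ c' : κ, ∑ c ∈ Finset.univ.filter (fun c => g1 c = c'), F c) = ∑ c, F c := by
    intro F
    simp_rw [Finset.sum_filter]
    rw [Finset.sum_comm]
    simp
  calc ∑ c' ∈ Finset.univ.filter (fun c' => g2 c' = C),
        ∑ c ∈ Finset.univ.filter (fun c => g1 c = c'), μ c
      = ∑ c' : κ, if g2 c' = C then ∑ c ∈ Finset.univ.filter (fun c => g1 c = c'), μ c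
          else 0 := by rw [Finset.sum_filter]
    _ = ∑ c' : κ, ∑ c ∈ Finset.univ.filter (fun c => g1 c = c'),
          (if g2 (g1 c) = C then μ c else 0) := by
        refine Finset.sum_congr rfl fun c' _ => ?_
        by_cases h : g2 c' = C
        · rw [if_pos h]
          refine Finset.sum_congr rfl fun c hc => ?_
          rw [Finset.mem_filter] at hc
          rw [if_pos (by rw [hc.2, h])]
        · rw [if_neg h]
          refine (Finset.sum_eq_zero fun c hc => ?_).symm
          rw [Finset.mem_filter] at hc
          rw [if_neg (by rw [hc.2]; exact h)]
    _ = ∑ c, (if g2 (g1 c) = C then μ c else 0) := fib _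
    _ = ∑ c ∈ Finset.univ.filter (fun c => g2 (g1 c) = C), μ c := by
        rw [Finset.sum_filter]


lemma push_push {s1 s2 s3 : Finset G.E} (h12 : s1 ⊆ s2) (h23 : s2 ⊆ s3)
    (c : (G.spanning ↑s1).ConnectedComponent) :
    push G h23 (push G h12 c) = (G.spanning ↑s3).connectedComponentMk c.out := by
  have hc : c = (G.spanning ↑s1).connectedComponentMk c.out := (Quot.out_eq c).symm
  conv_lhs => rw [hc]
  rw [push_mk, push_mk]

lemma MBasis.ext' {p q : MBasis G} (h1 : p.1 = q.1)
    (h2 : ∀ w : G.V, p.2 ((G.spanning ↑p.1).connectedComponentMk w)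
      = q.2 ((G.spanning ↑q.1).connectedComponentMk w)) : p = q := by
  obtain ⟨s, μ⟩ := p
  obtain ⟨t, ν⟩ := q
  dsimp only at h1
  subst h1
  dsimp only at h2
  congr 1
  funext c
  induction c using SimpleGraph.ConnectedComponent.ind with
  | _ w => exact h2 w

lemma spanning_mono {s s' : Finset G.E} (h : s ⊆ s') : G.spanning ↑s ≤ G.spanning ↑s' := by
  rintro a b ⟨hne, g, hgs, hg⟩
  exact ⟨hne, g, h hgs, hg⟩

lemma rcond_mono {s s' : Finset G.E} (h : s ⊆ s') (g : G.E) (hr : rcond G s g) :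
    rcond G s' g := fun a b hab => (hr a b hab).mono (spanning_mono h)

/-- Adding edge `f` connects the endpoints of `e` only if adding `e` also
connects the endpoints of `f` (and then all four endpoints lie in one component). -/
lemma cross {s : Finset G.E} {ue ve uf vf : G.V}
    (hee : G.ends e = s(ue, ve)) (hff : G.ends f = s(uf, vf))
    (h1 : ¬ (G.spanning ↑s).Reachable ue ve)
    (h2 : (G.spanning ↑(insert f s)).Reachable ue ve) :
    ¬ (G.spanning ↑s).Reachable uf vf ∧ (G.spanning ↑(insert e s)).Reachable uf vf ∧
      ((G.spanning ↑s).Reachable ue uf ∨ (G.spanning ↑s).Reachable ue vf) := by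
  rw [reach_insert G f s hff] at h2
  rcases h2 with h | ⟨a1, a2⟩ | ⟨b1, b2⟩
  · exact absurd h h1
  · refine ⟨fun r => h1 ((a1.trans r).trans a2), ?_, Or.inl a1⟩
    rw [reach_insert G e s hee]
    exact Or.inr (Or.inl ⟨a1.symm, a2.symm⟩)
  · refine ⟨fun r => h1 ((b1.trans r.symm).trans b2), ?_, Or.inr b1⟩
    rw [reach_insert G e s hee]
    exact Or.inr (Or.inr ⟨b2, b1⟩)

/-- Closed formula for the monomial exponents after applying two per-edge maps. -/
lemma addEdgeM2_value (he : e ∉ p.1) (hf : f ∉ p.1) (hef : f ≠ e)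
    {ue ve uf vf : G.V} (hee : G.ends e = s(ue, ve)) (hff : G.ends f = s(uf, vf)) (w : G.V) :
    (addEdgeM G n (addEdgeM G n p e) f).2
        ((G.spanning ↑(addEdgeM G n (addEdgeM G n p e) f).1).connectedComponentMk w)
      = (letI := Fintype.ofFinite (G.spanning ↑p.1).ConnectedComponent
         ∑ c ∈ Finset.univ.filter (fun c =>
            (G.spanning ↑(insert f (insert e p.1))).Reachable c.out w), p.2 c)
        + ((if (G.spanning ↑(insert f (insert e p.1))).Reachable ue w
            then (if rcond G p.1 e then 1 else (2 - n).toNat) else 0)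
         + (if (G.spanning ↑(insert f (insert e p.1))).Reachable uf w
            then (if rcond G (insert e p.1) f then 1 else (2 - n).toNat) else 0)) := by
  letI := Fintype.ofFinite (G.spanning ↑p.1).ConnectedComponent
  letI := Fintype.ofFinite (G.spanning ↑(insert e p.1)).ConnectedComponent
  letI := Fintype.ofFinite (G.spanning ↑(insert f (insert e p.1))).ConnectedComponent
  have hfs1 : f ∉ insert e p.1 := by
    simp only [Finset.mem_insert]
    rintro (rfl | h)
    · exact hef rfl
    · exact hf h
  have step1 : (addEdgeM G n (addEdgeM G n p e) f).2
        ((G.spanning ↑(addEdgeM G n (addEdgeM G n p e) f).1).connectedComponentMk w)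
      = (∑ c' ∈ Finset.univ.filter
            (fun c' => push G (Finset.subset_insert f (insert e p.1)) c'
              = (G.spanning ↑(insert f (insert e p.1))).connectedComponentMk w),
          (addEdgeM G n p e).2 c')
        + (if (∃ u ∈ G.ends f, (G.spanning ↑(insert f (insert e p.1))).connectedComponentMk u
              = (G.spanning ↑(insert f (insert e p.1))).connectedComponentMk w)
           then (if rcond G (insert e p.1) f then 1 else (2 - n).toNat) else 0) := rfl
  rw [step1]
  have step2 : (∑ c' ∈ Finset.univ.filter
        (fun c' => push G (Finset.subset_insert f (insert e p.1)) c'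
          = (G.spanning ↑(insert f (insert e p.1))).connectedComponentMk w),
      (addEdgeM G n p e).2 c')
      = (∑ c' ∈ Finset.univ.filter
          (fun c' => push G (Finset.subset_insert f (insert e p.1)) c'
            = (G.spanning ↑(insert f (insert e p.1))).connectedComponentMk w),
        ((∑ c ∈ Finset.univ.filter
            (fun c => push G (Finset.subset_insert e p.1) c = c'), p.2 c) +
         (if (∃ u ∈ G.ends e, (G.spanning ↑(insert e p.1)).connectedComponentMk u = c')
          then (if rcond G p.1 e then 1 else (2 - n).toNat) else 0))) :=
    Finset.sum_congr rfl fun c' _ => addEdgeM_snd_apply n p e c'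
  rw [step2, Finset.sum_add_distrib]
  have hA : (∑ c' ∈ Finset.univ.filter
        (fun c' => push G (Finset.subset_insert f (insert e p.1)) c'
          = (G.spanning ↑(insert f (insert e p.1))).connectedComponentMk w),
      ∑ c ∈ Finset.univ.filter
          (fun c => push G (Finset.subset_insert e p.1) c = c'), p.2 c)
      = ∑ c ∈ Finset.univ.filter (fun c =>
          (G.spanning ↑(insert f (insert e p.1))).Reachable c.out w), p.2 c := by
    rw [sum_fiber_comp (push G (Finset.subset_insert e p.1))
      (push G (Finset.subset_insert f (insert e p.1)))
      ((G.spanning ↑(insert f (insert e p.1))).connectedComponentMk w) p.2]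
    refine Finset.sum_congr (Finset.filter_congr fun c _ => ?_) fun _ _ => rfl
    rw [push_push, mk_eq_iff]
  have hB : (∑ c' ∈ Finset.univ.filter
        (fun c' => push G (Finset.subset_insert f (insert e p.1)) c'
          = (G.spanning ↑(insert f (insert e p.1))).connectedComponentMk w),
      (if (∃ u ∈ G.ends e, (G.spanning ↑(insert e p.1)).connectedComponentMk u = c')
       then (if rcond G p.1 e then 1 else (2 - n).toNat) else 0))
      = (if (G.spanning ↑(insert f (insert e p.1))).Reachable ue w
         then (if rcond G p.1 e then 1 else (2 - n).toNat) else 0) := by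
    have hconde := endpoint_cond_iff hee (Finset.mem_insert_self e p.1)
    rw [Finset.sum_congr rfl (fun c' _ => if_congr (hconde c') rfl rfl),
      Finset.sum_ite_eq']
    have hiff : ((G.spanning ↑(insert e p.1)).connectedComponentMk ue ∈
        Finset.univ.filter (fun c' => push G (Finset.subset_insert f (insert e p.1)) c'
          = (G.spanning ↑(insert f (insert e p.1))).connectedComponentMk w)) ↔
        (G.spanning ↑(insert f (insert e p.1))).Reachable ue w := by
      rw [Finset.mem_filter, push_mk, mk_eq_iff]
      simp only [Finset.mem_univ, true_and]
    rw [if_congr hiff rfl rfl]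
  have hC : (if (∃ u ∈ G.ends f, (G.spanning ↑(insert f (insert e p.1))).connectedComponentMk u
        = (G.spanning ↑(insert f (insert e p.1))).connectedComponentMk w)
       then (if rcond G (insert e p.1) f then 1 else (2 - n).toNat) else 0)
      = (if (G.spanning ↑(insert f (insert e p.1))).Reachable uf w
         then (if rcond G (insert e p.1) f then 1 else (2 - n).toNat) else 0) := by
    have hcondf := endpoint_cond_iff hff (Finset.mem_insert_self f (insert e p.1))
    rw [if_congr (hcondf _) rfl rfl, if_congr (mk_eq_iff _ _ _) rfl rfl,
      if_congr SimpleGraph.reachable_comm rfl rfl]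
  rw [hA, hB, hC, add_assoc]

lemma addEdgeM_comm (hef : e ≠ f) (he : e ∉ p.1) (hf : f ∉ p.1) :
    addEdgeM G n (addEdgeM G n p e) f = addEdgeM G n (addEdgeM G n p f) e := by
  obtain ⟨ue, ve, hee⟩ := exists_ends G e
  obtain ⟨uf, vf, hff⟩ := exists_ends G f
  apply MBasis.ext'
  · rw [addEdgeM_fst, addEdgeM_fst, addEdgeM_fst, addEdgeM_fst]
    exact Finset.insert_comm f e p.1
  · intro w
    rw [addEdgeM2_value he hf hef.symm hee hff w,
        addEdgeM2_value hf he hef hff hee w]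
    have hcomm : insert f (insert e p.1) = insert e (insert f p.1) :=
      Finset.insert_comm f e p.1
    simp only [hcomm]
    congr 1
    by_cases hRe : rcond G p.1 e
    · have hRe' : rcond G (insert f p.1) e := rcond_mono (Finset.subset_insert f p.1) e hRe
      by_cases hRf : rcond G p.1 f
      · have hRf' : rcond G (insert e p.1) f := rcond_mono (Finset.subset_insert e p.1) f hRf
        rw [if_pos hRe, if_pos hRe', if_pos hRf, if_pos hRf']
        exact add_comm _ _
      · have hRf' : ¬ rcond G (insert e p.1) f := by
          intro hr
          obtain ⟨hcontra, -, -⟩ := cross hff hee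
            (fun r => hRf ((rcond_iff G hff).2 r)) ((rcond_iff G hff).1 hr)
          exact hcontra ((rcond_iff G hee).1 hRe)
        rw [if_pos hRe, if_pos hRe', if_neg hRf, if_neg hRf']
        exact add_comm _ _
    · by_cases hRe' : rcond G (insert f p.1) e
      · obtain ⟨h1f, h2f, hor⟩ := cross hee hff
          (fun r => hRe ((rcond_iff G hee).2 r)) ((rcond_iff G hee).1 hRe')
        have hRf : ¬ rcond G p.1 f := fun hr => h1f ((rcond_iff G hff).1 hr)
        have hRf' : rcond G (insert e p.1) f := (rcond_iff G hff).2 h2f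
        rw [if_neg hRe, if_pos hRe', if_neg hRf, if_pos hRf']
        have hsub : p.1 ⊆ insert e (insert f p.1) :=
          (Finset.subset_insert f p.1).trans (Finset.subset_insert e _)
        have hueuf : (G.spanning ↑(insert e (insert f p.1))).Reachable ue uf := by
          rcases hor with h | h
          · exact h.mono (spanning_mono hsub)
          · exact (h.mono (spanning_mono hsub)).trans
              (reach_of_mem hff (Finset.mem_insert_of_mem (Finset.mem_insert_self f p.1))).symm
        have hAB : (G.spanning ↑(insert e (insert f p.1))).Reachable ue w ↔
            (G.spanning ↑(insert e (insert f p.1))).Reachable uf w :=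
          ⟨fun h => hueuf.symm.trans h, fun h => hueuf.trans h⟩
        by_cases hA : (G.spanning ↑(insert e (insert f p.1))).Reachable ue w
        · rw [if_pos hA, if_pos hA, if_pos (hAB.1 hA), if_pos (hAB.1 hA)]
        · rw [if_neg hA, if_neg hA, if_neg (fun h => hA (hAB.2 h)),
            if_neg (fun h => hA (hAB.2 h))]
      · by_cases hRf : rcond G p.1 f
        · have hRf' : rcond G (insert e p.1) f := rcond_mono (Finset.subset_insert e p.1) f hRf
          rw [if_neg hRe, if_neg hRe', if_pos hRf, if_pos hRf']
          exact add_comm _ _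
        · have hRf' : ¬ rcond G (insert e p.1) f := by
            intro hr
            obtain ⟨-, hcontra, -⟩ := cross hff hee
              (fun r => hRf ((rcond_iff G hff).2 r)) ((rcond_iff G hff).1 hr)
            exact hRe' ((rcond_iff G hee).2 hcontra)
          rw [if_neg hRe, if_neg hRe', if_neg hRf, if_neg hRf']
          exact add_comm _ _

end Comm

section Maps
variable {G}
variable {n : ℤ} {p : MBasis G} {e f : G.E}

lemma perEdge_single (n : ℤ) (e : G.E) (p : MBasis G) :
    perEdge G n e (Finsupp.single p (1 : ℤ)) =
      if e ∈ p.1 then 0 else Finsupp.single (addEdgeM G n p e) (1 : ℤ) := by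
  rw [perEdge, Finsupp.lift_apply, Finsupp.sum_single_index (by simp), one_smul]

lemma mDiff_single (n : ℤ) (ord : G.E ↪ ℕ) (p : MBasis G) :
    mDiff G n ord (Finsupp.single p (1 : ℤ)) =
      (letI : Fintype G.E := Fintype.ofFinite G.E
       ∑ e ∈ Finset.univ.filter (fun e => e ∉ p.1),
        ((-1 : ℤ) ^ (p.1.filter (fun g => ord g < ord e)).card) •
          Finsupp.single (addEdgeM G n p e) (1 : ℤ)) := by
  rw [mDiff, Finsupp.lift_apply, Finsupp.sum_single_index (by simp), one_smul]

lemma mDiff_mDiff_single (n : ℤ) (ord : G.E ↪ ℕ) (p : MBasis G) :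
    mDiff G n ord (mDiff G n ord (Finsupp.single p (1 : ℤ))) = 0 := by
  letI : Fintype G.E := Fintype.ofFinite G.E
  rw [mDiff_single, map_sum]
  have hterm : ∀ e ∈ Finset.univ.filter (fun e => e ∉ p.1),
      mDiff G n ord (((-1 : ℤ) ^ (p.1.filter (fun g => ord g < ord e)).card) •
          Finsupp.single (addEdgeM G n p e) (1 : ℤ))
        = ∑ f : G.E,
            (if e ∉ p.1 ∧ f ∉ p.1 ∧ f ≠ e then
              (((-1 : ℤ) ^ (p.1.filter (fun g => ord g < ord e)).card) *
               ((-1 : ℤ) ^ ((insert e p.1).filter (fun g => ord g < ord f)).card)) •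
                Finsupp.single (addEdgeM G n (addEdgeM G n p e) f) (1 : ℤ)
            else 0) := by
    intro e hemem
    rw [Finset.mem_filter] at hemem
    rw [map_smul, mDiff_single]
    rw [addEdgeM_fst]
    rw [Finset.smul_sum, Finset.sum_filter]
    refine Finset.sum_congr rfl fun f _ => ?_
    by_cases hf : f ∈ insert e p.1
    · rw [if_neg (not_not_intro hf), if_neg (by
        rw [Finset.mem_insert] at hf
        rintro ⟨-, hf2, hf3⟩
        rcases hf with rfl | hf
        · exact hf3 rfl
        · exact hf2 hf)]
    · rw [Finset.mem_insert, not_or] at hf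
      rw [if_pos (by rw [Finset.mem_insert]; push_neg; exact hf),
        if_pos ⟨hemem.2, hf.2, hf.1⟩, smul_smul]
  rw [Finset.sum_congr rfl hterm]
  have hvanish : ∀ e ∈ (Finset.univ : Finset G.E),
      e ∉ Finset.univ.filter (fun e => e ∉ p.1) →
      (∑ f : G.E,
        (if e ∉ p.1 ∧ f ∉ p.1 ∧ f ≠ e then
          (((-1 : ℤ) ^ (p.1.filter (fun g => ord g < ord e)).card) *
           ((-1 : ℤ) ^ ((insert e p.1).filter (fun g => ord g < ord f)).card)) •
            Finsupp.single (addEdgeM G n (addEdgeM G n p e) f) (1 : ℤ)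
        else 0)) = 0 := by
    intro e _ hnot
    rw [Finset.mem_filter] at hnot
    refine Finset.sum_eq_zero fun f _ => ?_
    rw [if_neg (fun hcond => hnot ⟨Finset.mem_univ e, hcond.1⟩)]
  rw [Finset.sum_subset (Finset.filter_subset _ Finset.univ) hvanish]
  rw [← Finset.sum_product']
  have key1 : ∀ a b : ℕ, ((-1 : ℤ) ^ a * (-1 : ℤ) ^ (b + 1)) + ((-1 : ℤ) ^ b * (-1 : ℤ) ^ (a + 0)) = 0 := by
    intro a b; ring
  have key2 : ∀ a b : ℕ, ((-1 : ℤ) ^ a * (-1 : ℤ) ^ (b + 0)) + ((-1 : ℤ) ^ b * (-1 : ℤ) ^ (a + 1)) = 0 := by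
    intro a b; ring
  refine Finset.sum_involution (fun q _ => (q.2, q.1)) ?_ ?_ (fun q hq => Finset.mem_product.2
    ⟨Finset.mem_univ _, Finset.mem_univ _⟩) (fun q hq => rfl)
  · rintro ⟨e, f⟩ -
    dsimp only
    by_cases hc : e ∉ p.1 ∧ f ∉ p.1 ∧ f ≠ e
    · rw [if_pos hc, if_pos ⟨hc.2.1, hc.1, hc.2.2.symm⟩]
      have hsingle : Finsupp.single (addEdgeM G n (addEdgeM G n p e) f) (1 : ℤ)
          = Finsupp.single (addEdgeM G n (addEdgeM G n p f) e) (1 : ℤ) := by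
        rw [addEdgeM_comm hc.2.2.symm hc.1 hc.2.1]
      rw [hsingle]
      have hbf : ((insert e p.1).filter (fun g => ord g < ord f)).card
          = (p.1.filter (fun g => ord g < ord f)).card + (if ord e < ord f then 1 else 0) := by
        rw [Finset.filter_insert]
        split_ifs with h
        · rw [Finset.card_insert_of_notMem (fun hm => hc.1 (Finset.mem_of_mem_filter _ hm))]
        · rw [Nat.add_zero]
      have hbe : ((insert f p.1).filter (fun g => ord g < ord e)).card
          = (p.1.filter (fun g => ord g < ord e)).card + (if ord f < ord e then 1 else 0) := by
        rw [Finset.filter_insert]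
        split_ifs with h
        · rw [Finset.card_insert_of_notMem (fun hm => hc.2.1 (Finset.mem_of_mem_filter _ hm))]
        · rw [Nat.add_zero]
      have hne : ord e ≠ ord f := fun h => hc.2.2 (ord.injective h.symm)
      rcases lt_or_gt_of_ne hne with h | h
      · rw [hbf, if_pos h, hbe, if_neg (by omega), ← add_smul, key1, zero_smul]
      · rw [hbf, if_neg (by omega), hbe, if_pos h, ← add_smul, key2, zero_smul]
    · rw [if_neg hc, if_neg (by
        rintro ⟨h1, h2, h3⟩
        exact hc ⟨h2, h1, h3.symm⟩), add_zero]
  · rintro ⟨e, f⟩ - hne0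
    intro heq
    rw [Prod.mk.injEq] at heq
    apply hne0
    rw [if_neg (by rintro ⟨-, -, h3⟩; exact h3 heq.1)]

end Maps

end MultiGraph
end Lemmas

open MultiGraph in
/-- the per-edge maps of the construction of Section 3.4 preserve the
grading, make every square of the cube of resolutions commute, and the signed sums
satisfy `d ∘ d = 0`; hence `(D_n(G), d)` is a chain complex of graded ℤ-modules with
grading-preserving differentials, for every finite graph `G` and integer `n ≤ 2`. -/
theorem mcube_chain_complex (G : MultiGraph) (n : ℤ) (hn : n ≤ 2) :
    -- the per-edge maps preserve the grading (raising the cube degree by one):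
    (∀ (e : G.E) (i : ℕ) (j : ℤ),
      (mDegSub G n i j).map (perEdge G n e) ≤ mDegSub G n (i + 1) j) ∧
    -- every square of the cube commutes:
    (∀ (e f : G.E), e ≠ f → ∀ p : MBasis G, e ∉ p.1 → f ∉ p.1 →
      perEdge G n f (perEdge G n e (Finsupp.single p (1 : ℤ)))
        = perEdge G n e (perEdge G n f (Finsupp.single p (1 : ℤ)))) ∧
    -- the signed sums give a differential:
    (∀ ord : G.E ↪ ℕ, (mDiff G n ord).comp (mDiff G n ord) = 0) ∧
    -- which is grading preserving:
    (∀ (ord : G.E ↪ ℕ) (i : ℕ) (j : ℤ),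
      (mDegSub G n i j).map (mDiff G n ord) ≤ mDegSub G n (i + 1) j) := by
  classical
  refine ⟨?_, ?_, ?_, ?_⟩
  · intro e i j
    rw [mDegSub, Submodule.map_span_le]
    rintro m ⟨p, hc, hd, rfl⟩
    rw [perEdge_single]
    split_ifs with hmem
    · exact Submodule.zero_mem _
    · exact Submodule.subset_span ⟨addEdgeM G n p e,
        by rw [card_addEdgeM hmem, hc],
        by rw [mdeg_addEdgeM hn hmem, hd], rfl⟩
  · intro e f hef p he hf
    have h1 : f ∉ (addEdgeM G n p e).1 := by
      rw [addEdgeM_fst, Finset.mem_insert]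
      push_neg
      exact ⟨fun h => hef h.symm, hf⟩
    have h2 : e ∉ (addEdgeM G n p f).1 := by
      rw [addEdgeM_fst, Finset.mem_insert]
      push_neg
      exact ⟨hef, he⟩
    rw [perEdge_single, if_neg he, perEdge_single, if_neg h1]
    rw [perEdge_single, if_neg hf, perEdge_single, if_neg h2]
    rw [addEdgeM_comm hef he hf]
  · intro ord
    apply Finsupp.lhom_ext
    intro p b
    rw [LinearMap.comp_apply, LinearMap.zero_apply]
    have hb : (Finsupp.single p b : MBasis G →₀ ℤ) = b • Finsupp.single p (1 : ℤ) := by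
      rw [Finsupp.smul_single, smul_eq_mul, mul_one]
    rw [hb, map_smul, map_smul, mDiff_mDiff_single, smul_zero]
  · intro ord i j
    rw [mDegSub, Submodule.map_span_le]
    rintro m ⟨p, hc, hd, rfl⟩
    rw [mDiff_single]
    refine Submodule.sum_mem _ fun e hemem => Submodule.smul_mem _ _
      (Submodule.subset_span ⟨addEdgeM G n p e, ?_, ?_, rfl⟩)
    · rw [Finset.mem_filter] at hemem
      rw [card_addEdgeM hemem.2, hc]
    · rw [Finset.mem_filter] at hemem
      rw [mdeg_addEdgeM hn hemem.2, hd]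
end
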